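/- For g = [[α, β], [γ, δ]] ∈ SL₂(ℤ) and τ in the upper half plane ℍ, define a_g(τ) := [[γτ + δ, 0], [γ/(2πi), (γτ + δ)⁻¹]] ∈ SL₂(ℂ), where g acts on ℍ by gτ = (ατ + β)/(γτ + δ). Then for all g₁, g₂ ∈ SL₂(ℤ) and τ ∈ ℍ: a_{g₁g₂}(τ) = a_{g₂}(τ) · a_{g₁}(g₂τ). -/

import Mathlib

open Complex UpperHalfPlane Matrix

namespace Stmt19

noncomputable def aMat (g : Matrix.SpecialLinearGroup (Fin 2) ℤ) (τ : UpperHalfPlane) :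
    Matrix (Fin 2) (Fin 2) ℂ :=
  !![(g.1 1 0 : ℂ) * (τ : ℂ) + (g.1 1 1 : ℂ), 0;
     (g.1 1 0 : ℂ) / (2 * Real.pi * Complex.I),
       ((g.1 1 0 : ℂ) * (τ : ℂ) + (g.1 1 1 : ℂ))⁻¹]

lemma denom_ne' (g : Matrix.SpecialLinearGroup (Fin 2) ℤ) (τ : UpperHalfPlane) :
    (g.1 1 0 : ℂ) * (τ : ℂ) + (g.1 1 1 : ℂ) ≠ 0 := by
  have h := UpperHalfPlane.linear_ne_zero (cd := ![(g.1 1 0 : ℝ), (g.1 1 1 : ℝ)]) τ ?_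
  · simpa using h
  · intro h
    have h0 : (g.1 1 0 : ℝ) = 0 := congrFun h 0
    have h1 : (g.1 1 1 : ℝ) = 0 := congrFun h 1
    have hd := g.2
    rw [Matrix.det_fin_two] at hd
    have ha : g.1 1 0 = 0 := by exact_mod_cast h0
    have hb : g.1 1 1 = 0 := by exact_mod_cast h1
    rw [ha, hb] at hd
    simp at hd

lemma smul_coe (g : Matrix.SpecialLinearGroup (Fin 2) ℤ) (τ : UpperHalfPlane) :
    ((g • τ : UpperHalfPlane) : ℂ) =
      ((g.1 0 0 : ℂ) * τ + g.1 0 1) / ((g.1 1 0 : ℂ) * τ + g.1 1 1) := by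
  rw [UpperHalfPlane.specialLinearGroup_apply]
  simp

end Stmt19

namespace Stmt19

theorem stmt19 :
    (∀ (g : Matrix.SpecialLinearGroup (Fin 2) ℤ) (τ : UpperHalfPlane),
      (aMat g τ).det = 1) ∧
    ∀ (g₁ g₂ : Matrix.SpecialLinearGroup (Fin 2) ℤ) (τ : UpperHalfPlane),
      aMat (g₁ * g₂) τ = aMat g₂ τ * aMat g₁ (g₂ • τ) := by
  constructor
  · intro g τ
    rw [aMat, Matrix.det_fin_two_of, mul_inv_cancel₀ (denom_ne' g τ)]
    ring
  · intro g₁ g₂ τ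
    have h2 := denom_ne' g₂ τ
    have h1 := denom_ne' g₁ (g₂ • τ)
    have hc := smul_coe g₂ τ
    rw [hc] at h1
    have hpi : (2 * (Real.pi : ℂ) * Complex.I) ≠ 0 := by
      simp [Real.pi_ne_zero, Complex.I_ne_zero]
    have hd2 : (g₂.1 0 0 : ℂ) * g₂.1 1 1 - g₂.1 0 1 * g₂.1 1 0 = 1 := by
      have := g₂.2
      rw [Matrix.det_fin_two] at this
      exact_mod_cast congrArg (Int.cast : ℤ → ℂ) this
    ext i j
    fin_cases i <;> fin_cases j <;>
      simp only [aMat, Matrix.mul_apply, Fin.sum_univ_two, hc,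
        Matrix.SpecialLinearGroup.coe_mul, Matrix.cons_val', Matrix.cons_val_zero,
        Matrix.cons_val_one, Matrix.head_cons, Matrix.head_fin_const, Matrix.empty_val',
        Matrix.cons_val_fin_one, Matrix.of_apply, Fin.mk_zero, Fin.mk_one] <;>
      push_cast
    · field_simp [h2]
      ring
    · simp
    · field_simp [h2]
      linear_combination (g₁.1 1 0 : ℂ) * hd2
    · rw [mul_zero, zero_add, ← mul_inv]
      congr 1
      field_simp [h2]
      ring

end Stmt19
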